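/- Let R be a unital ring and A a 3×3 matrix over R whose trace is a commutator. Then A = N + K + L, where N is a nilpotent matrix with N³ = 0, K is upper triangular with zero diagonal, and L is lower triangular with zero diagonal; in particular A is a sum of three nilpotent matrices of nilpotency index at most 3. -/
import Mathlib

lemma aux_upper3 {R : Type*} [Ring R] (p q r : R) :
    (!![0, p, q; 0, 0, r; 0, 0, 0] : Matrix (Fin 3) (Fin 3) R) ^ 3 = 0 := by
  ext i j
  fin_cases i <;> fin_cases j <;>
    simp [pow_succ, Matrix.mul_apply, Fin.sum_univ_three, Matrix.vecHead, Matrix.vecTail]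

lemma aux_lower3 {R : Type*} [Ring R] (p q r : R) :
    (!![0, 0, 0; p, 0, 0; q, r, 0] : Matrix (Fin 3) (Fin 3) R) ^ 3 = 0 := by
  ext i j
  fin_cases i <;> fin_cases j <;>
    simp [pow_succ, Matrix.mul_apply, Fin.sum_univ_three, Matrix.vecHead, Matrix.vecTail]

lemma aux_upper_tri {R : Type*} [Ring R] (p q r : R) :
    ∀ i j : Fin 3, j ≤ i → (!![0, p, q; 0, 0, r; 0, 0, 0] : Matrix (Fin 3) (Fin 3) R) i j = 0 := by
  intro i j hij
  fin_cases i <;> fin_cases j <;>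
    first
      | exact absurd hij (by decide)
      | simp [Matrix.vecHead, Matrix.vecTail]

lemma aux_lower_tri {R : Type*} [Ring R] (p q r : R) :
    ∀ i j : Fin 3, i ≤ j → (!![0, 0, 0; p, 0, 0; q, r, 0] : Matrix (Fin 3) (Fin 3) R) i j = 0 := by
  intro i j hij
  fin_cases i <;> fin_cases j <;>
    first
      | exact absurd hij (by decide)
      | simp [Matrix.vecHead, Matrix.vecTail]

lemma aux_split {R : Type*} [Ring R] (A B : Matrix (Fin 3) (Fin 3) R)
    (h0 : B 0 0 = A 0 0) (h1 : B 1 1 = A 1 1) (h2 : B 2 2 = A 2 2) :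
    A = B + !![0, (A - B) 0 1, (A - B) 0 2; 0, 0, (A - B) 1 2; 0, 0, 0]
          + !![0, 0, 0; (A - B) 1 0, 0, 0; (A - B) 2 0, (A - B) 2 1, 0] := by
  ext i j
  fin_cases i <;> fin_cases j <;>
    simp [Matrix.vecHead, Matrix.vecTail, h0, h1, h2, Matrix.sub_apply] <;> try abel

theorem stmt_18 (R : Type*) [Ring R] (A : Matrix (Fin 3) (Fin 3) R)
    (h : ∃ x y : R, Matrix.trace A = x * y - y * x) :
    ∃ N K L : Matrix (Fin 3) (Fin 3) R,
      A = N + K + L ∧ N ^ 3 = 0 ∧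
      (∀ i j : Fin 3, j ≤ i → K i j = 0) ∧
      (∀ i j : Fin 3, i ≤ j → L i j = 0) ∧
      K ^ 3 = 0 ∧ L ^ 3 = 0 := by
  obtain ⟨x, y, hxy⟩ := h
  set a := A 0 0 with ha
  set b := A 1 1 with hb
  have hA22 : A 2 2 = x * y - y * x - a - b := by
    rw [Matrix.trace, Fin.sum_univ_three] at hxy
    rw [← hxy]
    simp [Matrix.diag]
    abel
  set v : R := x - y * x - a with hv
  set P : Matrix (Fin 3) (Fin 3) R := !![1, 0, 0; x, 1, 0; v, 1, 1] with hP
  set Pinv : Matrix (Fin 3) (Fin 3) R := !![1, 0, 0; -x, 1, 0; y * x + a, -1, 1] with hPinv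
  set M : Matrix (Fin 3) (Fin 3) R := !![0, y, 1; 0, 0, x * y - x - b; 0, 0, 0] with hM
  set N : Matrix (Fin 3) (Fin 3) R := P * M * Pinv with hN
  have hPP : Pinv * P = 1 := by
    ext i j
    fin_cases i <;> fin_cases j <;>
      simp [hP, hPinv, Matrix.mul_apply, Fin.sum_univ_three, hv,
        Matrix.one_apply, Matrix.vecHead, Matrix.vecTail] <;>
      first | noncomm_ring | abel
  have hM3 : M * (M * M) = 0 := by
    ext i j
    fin_cases i <;> fin_cases j <;>
      simp [hM, Matrix.mul_apply, Fin.sum_univ_three, Matrix.vecHead, Matrix.vecTail]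
  have hN3 : N ^ 3 = 0 := by
    have : N ^ 3 = P * (M * (M * (M * Pinv))) := by
      rw [hN, pow_succ, pow_two]
      simp only [Matrix.mul_assoc]
      rw [show Pinv * (P * (M * (Pinv * (P * (M * Pinv))))) =
          M * (Pinv * (P * (M * Pinv))) by rw [← Matrix.mul_assoc, hPP, Matrix.one_mul],
        show Pinv * (P * (M * Pinv)) = M * Pinv by
          rw [← Matrix.mul_assoc, hPP, Matrix.one_mul]]
    rw [this, show M * (M * (M * Pinv)) = (M * (M * M)) * Pinv by
      simp only [Matrix.mul_assoc], hM3, Matrix.zero_mul, Matrix.mul_zero]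
  have h0 : N 0 0 = A 0 0 := by
    simp [hN, hP, hM, hPinv, Matrix.mul_apply, Fin.sum_univ_three, hv,
      Matrix.vecHead, Matrix.vecTail, ← ha] <;> noncomm_ring
  have h1 : N 1 1 = A 1 1 := by
    simp [hN, hP, hM, hPinv, Matrix.mul_apply, Fin.sum_univ_three, hv,
      Matrix.vecHead, Matrix.vecTail, ← hb] <;> noncomm_ring
  have h2 : N 2 2 = A 2 2 := by
    rw [hA22]
    simp [hN, hP, hM, hPinv, Matrix.mul_apply, Fin.sum_univ_three, hv,
      Matrix.vecHead, Matrix.vecTail] <;> noncomm_ring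
  exact ⟨N,
    !![0, (A - N) 0 1, (A - N) 0 2; 0, 0, (A - N) 1 2; 0, 0, 0],
    !![0, 0, 0; (A - N) 1 0, 0, 0; (A - N) 2 0, (A - N) 2 1, 0],
    aux_split A N h0 h1 h2, hN3, aux_upper_tri _ _ _, aux_lower_tri _ _ _,
    aux_upper3 _ _ _, aux_lower3 _ _ _⟩
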